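/- With n vertices, m edges, l legs in the quotient graph X, b_1(X) = m-n+1, and a degree-d representation ρ of G: L(u,ρ,Y/𝕏)^{-1} = (1-u^2)^{(b_1(X)-1)d} (1+u)^{l_{ρ,+}} (1-u)^{l_{ρ,-}} det(I_{nd} - C_ρ A_ρ u + (C_ρ Q_ρ - I_{nd})u^2), where l_{ρ,+} and l_{ρ,-} are the total numbers of +1 and -1 eigenvalues of the matrices ρ(F(l)) over all legs l. -/

import Mathlib

structure LegGraph where
  V : Type
  H : Type
  [fV : Fintype V]
  [fH : Fintype H]
  [dV : DecidableEq V]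
  [dH : DecidableEq H]
  r : H → V
  bar : H → H
  bar_bar : ∀ h, bar (bar h) = h

attribute [instance] LegGraph.fV LegGraph.fH LegGraph.dV LegGraph.dH

namespace LegGraph

def IsClosedPath (X : LegGraph) {n : ℕ} (h : ZMod n → X.H) : Prop :=
  ∀ j, X.r (h (j + 1)) = X.r (X.bar (h j))

def IsReducedPath (X : LegGraph) {n : ℕ} (h : ZMod n → X.H) : Prop :=
  ∀ j, h (j + 1) ≠ X.bar (h j)

def HasPeriod (X : LegGraph) {n : ℕ} (h : ZMod n → X.H) (d : ℕ) : Prop :=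
  ∀ j, h (j + (d : ZMod n)) = h j

def IsPrimitive (X : LegGraph) {n : ℕ} (h : ZMod n → X.H) : Prop :=
  ∀ d : ℕ, 0 < d → d ∣ n → X.HasPeriod h d → d = n

end LegGraph

/-- An edge-free Galois covering of graphs with legs: a group `G` acting on a finite
graph `Y`, freely on half-edges, together with the quotient graph `X = Y/G`, a lifted
spanning tree (recorded via the vertex section `vT`), a choice of identity sheet
(recorded via the half-edge section `sec`) and the Frobenius elements `F(h)`, as in
the construction of the quotient graph of groups `𝕏 = Y ⫽ G`. -/
structure EdgeFreeCover where
  Y : LegGraph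
  G : Type
  [grpG : Group G]
  [finG : Fintype G]
  [decG : DecidableEq G]
  act : G → Y.H → Y.H
  actV : G → Y.V → Y.V
  act_one : ∀ h, act 1 h = h
  act_mul : ∀ g g' h, act (g * g') h = act g (act g' h)
  actV_one : ∀ v, actV 1 v = v
  actV_mul : ∀ g g' v, actV (g * g') v = actV g (actV g' v)
  act_r : ∀ g h, Y.r (act g h) = actV g (Y.r h)
  act_bar : ∀ g h, Y.bar (act g h) = act g (Y.bar h)
  free : ∀ g h, act g h = h → g = 1
  X : LegGraph
  πV : Y.V → X.V
  πH : Y.H → X.H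
  πV_surj : Function.Surjective πV
  πH_r : ∀ f, X.r (πH f) = πV (Y.r f)
  πH_bar : ∀ f, X.bar (πH f) = πH (Y.bar f)
  πH_eq : ∀ f f', πH f = πH f' ↔ ∃ g, act g f = f'
  πV_eq : ∀ v v', πV v = πV v' ↔ ∃ g, actV g v = v'
  vT : X.V → Y.V
  vT_sec : ∀ v, πV (vT v) = v
  sec : X.H → Y.H
  sec_sec : ∀ h, πH (sec h) = h
  sec_root : ∀ h, Y.r (sec h) = vT (X.r h)
  F : X.H → G
  F_bar : ∀ h, F (X.bar h) = (F h)⁻¹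
  F_spec : ∀ h, act (F h) (sec (X.bar h)) = Y.bar (sec h)

attribute [instance] EdgeFreeCover.grpG EdgeFreeCover.finG EdgeFreeCover.decG

namespace EdgeFreeCover

variable (E : EdgeFreeCover)

/-- The sheet number `N(f)` of a half-edge `f` of `Y`: the unique `g ∈ G` with
`g · (π f)^S = f`. -/
noncomputable def N (f : E.Y.H) : E.G :=
  Classical.choose ((E.πH_eq (E.sec (E.πH f)) f).mp (E.sec_sec (E.πH f)))

/-- Membership in the vertex group `X_v` of the quotient graph of groups:
the stabilizer of the chosen lift `v^T`. -/
def InStab (v : E.X.V) (g : E.G) : Prop := E.actV g (E.vT v) = E.vT v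

/-- A closed path of length `n` in the quotient graph of groups `𝕏 = Y ⫽ G`,
recorded cyclically: half-edges `h j` and group elements `γ j` (with `γ j` the group
element immediately preceding `h j`), each lying in the vertex group at the root of
`h j`. -/
def IsClosedGPath {n : ℕ} (h : ZMod n → E.X.H) (γ : ZMod n → E.G) : Prop :=
  E.X.IsClosedPath h ∧ ∀ j, E.InStab (E.X.r (h j)) (γ j)

/-- The path `g₀h₁g₁⋯g_{n-1}h_n` is reduced if for every `j` either `h_{j+1} ≠ h̄_j`
or the intervening group element is nontrivial. -/
def IsReducedGPath {n : ℕ} (h : ZMod n → E.X.H) (γ : ZMod n → E.G) : Prop :=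
  ∀ j, h (j + 1) ≠ E.X.bar (h j) ∨ γ (j + 1) ≠ 1

/-- A closed path in `𝕏` has period `d` if it is invariant under rotation by `d`. -/
def GPathHasPeriod {n : ℕ} (h : ZMod n → E.X.H) (γ : ZMod n → E.G) (d : ℕ) : Prop :=
  ∀ j, h (j + (d : ZMod n)) = h j ∧ γ (j + (d : ZMod n)) = γ j

/-- A closed path in `𝕏` is primitive if it is not a proper power. -/
def GPathIsPrimitive {n : ℕ} (h : ZMod n → E.X.H) (γ : ZMod n → E.G) : Prop :=
  ∀ d : ℕ, 0 < d → d ∣ n → E.GPathHasPeriod h γ d → d = n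

/-- The Frobenius element `F(P) = g₀F(h₁)g₁F(h₂)⋯g_{n-1}F(h_n)` of a closed path
in `𝕏` (with chosen basepoint). -/
def Frob {n : ℕ} (h : ZMod n → E.X.H) (γ : ZMod n → E.G) : E.G :=
  (((List.range n).map fun i => γ (i : ZMod n) * E.F (h (i : ZMod n)))).prod

/-- The lift `π⁻¹(Q, s)` of a closed path `Q` in `𝕏` starting on the `s`-th sheet:
its `j`-th half-edge is `s · F(g₀h₁⋯h_j g_j) · h_{j+1}^S`. -/
def liftPath {n : ℕ} (h : ZMod n → E.X.H) (γ : ZMod n → E.G) (s : E.G)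
    (j : ZMod n) : E.Y.H :=
  E.act (s * (((List.range j.val).map fun i => γ (i : ZMod n) * E.F (h (i : ZMod n)))).prod
      * γ j) (E.sec (h j))

/-- The half-edge components of the image `π(P)` of a closed path `P` in `Y`. -/
def imgH {n : ℕ} (f : ZMod n → E.Y.H) (j : ZMod n) : E.X.H := E.πH (f j)

/-- The group components of the image `π(P)` of a closed path `P` in `Y`:
`g_j = F(h_j)⁻¹ N(f_j)⁻¹ N(f_{j+1})` (cyclically, with `g₀ = F(h_n)⁻¹N(f_n)⁻¹N(f₁)`). -/
noncomputable def imgG {n : ℕ} (f : ZMod n → E.Y.H) (j : ZMod n) : E.G :=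
  (E.F (E.πH (f (j - 1))))⁻¹ * (E.N (f (j - 1)))⁻¹ * E.N (f j)

end EdgeFreeCover

open Polynomial

namespace EdgeFreeCover

variable (E : EdgeFreeCover)

/-- The Artinized charge `c_ρ(v) = Σ_{g ∈ X_v} ρ(g)` of a vertex `v`. -/
noncomputable def artinCharge {d : ℕ} (ρ : E.G →* Matrix (Fin d) (Fin d) ℚ)
    (v : E.X.V) : Matrix (Fin d) (Fin d) ℚ :=
  ∑ᶠ g : {g : E.G // E.InStab v g}, ρ g.val

/-- The `kd × kd` Artinized half-edge matrix `W_ρ`. -/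
noncomputable def artinW {d : ℕ} (ρ : E.G →* Matrix (Fin d) (Fin d) ℚ) :
    Matrix (E.X.H × Fin d) (E.X.H × Fin d) ℚ := fun p q =>
  if q.1 = E.X.bar p.1 then
    ((E.artinCharge ρ (E.X.r q.1) - 1) * ρ (E.F q.1)) p.2 q.2
  else if E.X.r (E.X.bar p.1) = E.X.r q.1 then
    ((E.artinCharge ρ (E.X.r q.1)) * ρ (E.F q.1)) p.2 q.2
  else 0

/-- The `nd × nd` Artinized adjacency matrix, with blocks
`(A_ρ)_{uv} = Σ_{r(h)=u, r(h̄)=v} ρ(F(h))`. -/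
noncomputable def artinA {d : ℕ} (ρ : E.G →* Matrix (Fin d) (Fin d) ℚ) :
    Matrix (E.X.V × Fin d) (E.X.V × Fin d) ℚ := fun p q =>
  ∑ h ∈ Finset.univ.filter (fun h => E.X.r h = p.1 ∧ E.X.r (E.X.bar h) = q.1),
    ρ (E.F h) p.2 q.2

/-- The Artinized valency matrix `Q_ρ = Q ⊗ I_d`. -/
def artinQ (d : ℕ) : Matrix (E.X.V × Fin d) (E.X.V × Fin d) ℚ := fun p q =>
  if p = q then (Fintype.card {h : E.X.H // E.X.r h = p.1} : ℚ) else 0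

/-- The block-diagonal Artinized charge matrix `C_ρ`. -/
noncomputable def artinC {d : ℕ} (ρ : E.G →* Matrix (Fin d) (Fin d) ℚ) :
    Matrix (E.X.V × Fin d) (E.X.V × Fin d) ℚ := fun p q =>
  if p.1 = q.1 then (E.artinCharge ρ p.1) p.2 q.2 else 0

/-- The legs of the quotient graph `X`, as a finset of half-edges. -/
def legsFinset : Finset E.X.H := Finset.univ.filter fun h => E.X.bar h = h

/-- The number of edges of the quotient graph `X` (so `card H = 2m + l`). -/
def numEdgesX : ℕ := (Fintype.card E.X.H - E.legsFinset.card) / 2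

end EdgeFreeCover
namespace EdgeFreeCover

section Aux

variable {d : ℕ}

/-- Builder for matrices indexed by `α × Fin d` from block functions. -/
def blk {α β : Type} (f : α → β → Matrix (Fin d) (Fin d) ℚ) :
    Matrix (α × Fin d) (β × Fin d) ℚ := fun p q => f p.1 q.1 p.2 q.2

lemma blk_ext {α β : Type} {f g : α → β → Matrix (Fin d) (Fin d) ℚ}
    (h : ∀ a b, f a b = g a b) : blk f = blk g := by
  ext p q; simp [blk, h]

lemma blk_mul {α β γ : Type} [Fintype β] (f : α → β → Matrix (Fin d) (Fin d) ℚ)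
    (g : β → γ → Matrix (Fin d) (Fin d) ℚ) :
    blk f * blk g = blk (fun a c => ∑ b, f a b * g b c) := by
  ext p q
  rw [Matrix.mul_apply, Fintype.sum_prod_type]
  simp only [blk, Matrix.sum_apply, Matrix.mul_apply]

lemma blk_one {α : Type} [DecidableEq α] :
    (1 : Matrix (α × Fin d) (α × Fin d) ℚ) =
      blk (fun a b => if a = b then 1 else 0) := by
  ext p q
  by_cases h1 : p.1 = q.1 <;> by_cases h2 : p.2 = q.2 <;>
    simp [blk, Matrix.one_apply, Prod.ext_iff, h1, h2]

lemma blk_smul {α β : Type} (t : ℚ) (f : α → β → Matrix (Fin d) (Fin d) ℚ) :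
    t • blk f = blk (fun a b => t • f a b) := rfl

lemma blk_sub {α β : Type} (f g : α → β → Matrix (Fin d) (Fin d) ℚ) :
    blk f - blk g = blk (fun a b => f a b - g a b) := rfl

lemma rhoF_mul (E : EdgeFreeCover) (ρ : E.G →* Matrix (Fin d) (Fin d) ℚ)
    (h : E.X.H) : ρ (E.F h) * ρ (E.F (E.X.bar h)) = 1 := by
  rw [← map_mul, E.F_bar, mul_inv_cancel, map_one]

lemma rhoF_mul' (E : EdgeFreeCover) (ρ : E.G →* Matrix (Fin d) (Fin d) ℚ)
    (h : E.X.H) : ρ (E.F (E.X.bar h)) * ρ (E.F h) = 1 := by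
  rw [← map_mul, E.F_bar, inv_mul_cancel, map_one]

/-- Artinized bar-involution matrix. -/
noncomputable def Jm (E : EdgeFreeCover) (ρ : E.G →* Matrix (Fin d) (Fin d) ℚ) :
    Matrix (E.X.H × Fin d) (E.X.H × Fin d) ℚ :=
  blk fun h h' => if h' = E.X.bar h then ρ (E.F h') else 0

/-- Terminus incidence matrix. -/
noncomputable def Tm (E : EdgeFreeCover) (_ρ : E.G →* Matrix (Fin d) (Fin d) ℚ) :
    Matrix (E.X.H × Fin d) (E.X.V × Fin d) ℚ :=
  blk fun h v => if E.X.r (E.X.bar h) = v then 1 else 0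

/-- Charged start incidence matrix. -/
noncomputable def Sm (E : EdgeFreeCover) (ρ : E.G →* Matrix (Fin d) (Fin d) ℚ) :
    Matrix (E.X.V × Fin d) (E.X.H × Fin d) ℚ :=
  blk fun v h => if v = E.X.r h then E.artinCharge ρ v * ρ (E.F h) else 0

variable (E : EdgeFreeCover) (ρ : E.G →* Matrix (Fin d) (Fin d) ℚ)

lemma W_eq : E.artinW ρ = E.Tm ρ * E.Sm ρ - E.Jm ρ := by
  rw [Tm, Sm, Jm, blk_mul, blk_sub]
  ext ⟨h, i⟩ ⟨h', j⟩
  simp only [artinW, blk, ite_mul, mul_ite, one_mul, zero_mul, mul_zero,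
    Finset.sum_ite_eq, Finset.mem_univ, if_true]
  by_cases hb : h' = E.X.bar h
  · subst hb
    simp [Matrix.sub_apply, Matrix.sub_mul, Matrix.one_mul]
  · rw [if_neg hb]
    by_cases hr : E.X.r (E.X.bar h) = E.X.r h'
    · simp [hr, hb, Matrix.sub_apply]
    · simp [hr, hb, Matrix.sub_apply]

lemma J_sq : E.Jm ρ * E.Jm ρ = 1 := by
  rw [Jm, blk_mul, blk_one]
  apply blk_ext
  intro h h''
  rw [Finset.sum_eq_single (E.X.bar h)]
  · by_cases hh : h'' = h
    · subst hh
      simp [E.X.bar_bar, rhoF_mul']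
    · have : h'' ≠ E.X.bar (E.X.bar h) := by rwa [E.X.bar_bar]
      simp [hh, this, eq_comm (a := h)]
  · intro b _ hb
    simp [hb]
  · simp

end Aux

end EdgeFreeCover
namespace EdgeFreeCover

section Aux2

variable {d : ℕ} (E : EdgeFreeCover) (ρ : E.G →* Matrix (Fin d) (Fin d) ℚ)

lemma artinC_blk : E.artinC ρ =
    blk (fun u v => if u = v then E.artinCharge ρ u else 0) := by
  ext p q
  by_cases h : p.1 = q.1 <;> simp [artinC, blk, h]

lemma artinA_blk : E.artinA ρ =
    blk (fun u v => ∑ h ∈ Finset.univ.filter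
      (fun h => E.X.r h = u ∧ E.X.r (E.X.bar h) = v), ρ (E.F h)) := by
  ext p q
  simp [artinA, blk, Matrix.sum_apply]

lemma artinQ_blk : E.artinQ d =
    blk (fun u v => if u = v then
      (Fintype.card {h : E.X.H // E.X.r h = u} : ℚ) • 1 else 0) := by
  ext p q
  by_cases h1 : p.1 = q.1 <;> by_cases h2 : p.2 = q.2 <;>
    simp [artinQ, blk, Prod.ext_iff, h1, h2, Matrix.smul_apply, Matrix.one_apply]

lemma ST_eq : E.Sm ρ * E.Tm ρ = E.artinC ρ * E.artinA ρ := by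
  rw [Sm, Tm, blk_mul, artinC_blk, artinA_blk, blk_mul]
  apply blk_ext
  intro u v
  rw [Finset.sum_eq_single u]
  · simp only [if_pos rfl]
    rw [Finset.mul_sum, Finset.sum_filter]
    simp only [ite_mul, mul_ite, mul_one, mul_zero, zero_mul]
    apply Finset.sum_congr rfl
    intro h _
    by_cases h1 : E.X.r h = u <;> by_cases h2 : E.X.r (E.X.bar h) = v <;>
      simp [h1, h2, eq_comm (a := u)]
  · intro w _ hw
    simp [Ne.symm hw]
  · simp

lemma card_bar_fiber (u : E.X.V) :
    (Finset.univ.filter (fun h' => E.X.r (E.X.bar h') = u)).card =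
      Fintype.card {h : E.X.H // E.X.r h = u} := by
  rw [Fintype.card_subtype]
  apply Finset.card_bij (fun h _ => E.X.bar h)
  · intro h hh
    simp only [Finset.mem_filter, Finset.mem_univ, true_and] at hh ⊢
    exact hh
  · intro h1 h1m h2 h2m e
    have := congrArg E.X.bar e
    rwa [E.X.bar_bar, E.X.bar_bar] at this
  · intro h hh
    simp only [Finset.mem_filter, Finset.mem_univ, true_and] at hh ⊢
    exact ⟨E.X.bar h, by rw [E.X.bar_bar]; exact hh, E.X.bar_bar h⟩

lemma SJT_eq : E.Sm ρ * E.Jm ρ * E.Tm ρ = E.artinC ρ * E.artinQ d := by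
  have hSJ : E.Sm ρ * E.Jm ρ =
      blk (fun u h' => if u = E.X.r (E.X.bar h') then E.artinCharge ρ u else 0) := by
    rw [Sm, Jm, blk_mul]
    apply blk_ext
    intro u h'
    rw [Finset.sum_eq_single (E.X.bar h')]
    · by_cases hu : u = E.X.r (E.X.bar h')
      · simp only [if_pos hu, if_pos (E.X.bar_bar h').symm, mul_assoc,
          rhoF_mul' E ρ h', mul_one]
      · simp [hu, E.X.bar_bar]
    · intro b _ hb
      have : h' ≠ E.X.bar b := by
        intro e
        exact hb (by rw [e, E.X.bar_bar])
      simp [this]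
    · simp
  rw [hSJ, Tm, blk_mul, artinC_blk, artinQ_blk, blk_mul]
  apply blk_ext
  intro u v
  rw [Finset.sum_eq_single u]
  · simp only [eq_self_iff_true, if_true]
    by_cases huv : u = v
    · subst huv
      simp only [eq_self_iff_true, if_true]
      have h1 : ∀ h' : E.X.H,
          (if u = E.X.r (E.X.bar h') then E.artinCharge ρ u else 0) *
            (if E.X.r (E.X.bar h') = u then (1 : Matrix (Fin d) (Fin d) ℚ) else 0) =
          if E.X.r (E.X.bar h') = u then E.artinCharge ρ u else 0 := by
        intro h'
        by_cases hc : E.X.r (E.X.bar h') = u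
        · rw [if_pos hc.symm, if_pos hc, mul_one, if_pos hc]
        · rw [if_neg hc, mul_zero, if_neg hc]
      rw [Finset.sum_congr rfl (fun h' _ => h1 h')]
      rw [Finset.sum_ite, Finset.sum_const, Finset.sum_const_zero, add_zero]
      rw [Matrix.mul_smul, mul_one, ← card_bar_fiber E u, ← Nat.cast_smul_eq_nsmul ℚ]
    · have h1 : ∀ h' : E.X.H,
          (if u = E.X.r (E.X.bar h') then E.artinCharge ρ u else 0) *
            (if E.X.r (E.X.bar h') = v then (1 : Matrix (Fin d) (Fin d) ℚ) else 0) = 0 := by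
        intro h'
        by_cases hc : u = E.X.r (E.X.bar h')
        · have : ¬ (E.X.r (E.X.bar h') = v) := by rw [← hc]; exact huv
          simp [this]
        · simp [hc]
      rw [Finset.sum_congr rfl (fun h' _ => h1 h'), Finset.sum_const_zero, if_neg huv,
        mul_zero]
  · intro w _ hw
    simp [Ne.symm hw]
  · simp

end Aux2

end EdgeFreeCover
namespace EdgeFreeCover

section Aux3

variable {d : ℕ} (E : EdgeFreeCover)

/-- A linear position function on half-edges, used to orient the edges. -/
noncomputable def ordH : E.X.H → ℕ := fun h => (Fintype.equivFin E.X.H h : ℕ)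

lemma ordH_inj : Function.Injective E.ordH := by
  intro a b hab
  have := (Fintype.equivFin E.X.H).injective (Fin.val_injective hab)
  exact this

/-- Positively oriented non-leg half-edges. -/
abbrev OT : Type := {h : E.X.H // E.X.bar h ≠ h ∧ E.ordH h < E.ordH (E.X.bar h)}

/-- Legs, as a subtype. -/
abbrev LT : Type := {h : E.X.H // E.X.bar h = h}

/-- The sheet decomposition map on half-edges. -/
def fH : E.OT ⊕ (E.OT ⊕ E.LT) → E.X.H :=
  Sum.elim (fun o => o.val) (Sum.elim (fun o => E.X.bar o.val) (fun l => l.val))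

lemma OT_ne_barOT (o p : E.OT) : o.val ≠ E.X.bar p.val := by
  intro e
  have h1 := o.property.2
  have h2 := p.property.2
  rw [e, E.X.bar_bar] at h1
  exact lt_asymm h1 h2

lemma OT_ne_LT (o : E.OT) (l : E.LT) : o.val ≠ l.val := by
  intro e
  exact o.property.1 (by rw [e, l.property, ← e])

lemma barOT_ne_LT (o : E.OT) (l : E.LT) : E.X.bar o.val ≠ l.val := by
  intro e
  apply o.property.1
  have h1 : o.val = l.val := by
    have := congrArg E.X.bar e
    rwa [E.X.bar_bar, l.property] at this
  rw [e]
  exact h1.symm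

lemma fH_bij : Function.Bijective E.fH := by
  constructor
  · rintro (o | o | l) (p | p | m) he <;> simp only [fH, Sum.elim_inl, Sum.elim_inr] at he
    · exact congrArg Sum.inl (Subtype.ext he)
    · exact absurd he (E.OT_ne_barOT o p)
    · exact absurd he (E.OT_ne_LT o m)
    · exact absurd he.symm (E.OT_ne_barOT p o)
    · have := congrArg E.X.bar he
      rw [E.X.bar_bar, E.X.bar_bar] at this
      exact congrArg (Sum.inr ∘ Sum.inl) (Subtype.ext this)
    · exact absurd he (E.barOT_ne_LT o m)
    · exact absurd he.symm (E.OT_ne_LT p l)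
    · exact absurd he.symm (E.barOT_ne_LT p l)
    · exact congrArg (Sum.inr ∘ Sum.inr) (Subtype.ext he)
  · intro h
    by_cases hl : E.X.bar h = h
    · exact ⟨Sum.inr (Sum.inr ⟨h, hl⟩), rfl⟩
    · rcases lt_or_gt_of_ne (fun e => hl (E.ordH_inj e)) with ho | ho
      · refine ⟨Sum.inr (Sum.inl ⟨E.X.bar h, ?_, ?_⟩), ?_⟩
        · rw [E.X.bar_bar]; exact fun e => hl e.symm
        · rw [E.X.bar_bar]; exact ho
        · exact E.X.bar_bar h
      · exact ⟨Sum.inl ⟨h, hl, ho⟩, rfl⟩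

/-- The index equivalence used to put `1 + tJ` in block form. -/
noncomputable def eIdx : (E.OT × Fin d) ⊕ ((E.OT × Fin d) ⊕ (E.LT × Fin d)) ≃
    E.X.H × Fin d :=
  (((Equiv.refl (E.OT × Fin d)).sumCongr
      (Equiv.sumProdDistrib E.OT E.LT (Fin d)).symm).trans
    (Equiv.sumProdDistrib E.OT (E.OT ⊕ E.LT) (Fin d)).symm).trans
    ((Equiv.ofBijective E.fH E.fH_bij).prodCongr (Equiv.refl (Fin d)))

@[simp] lemma eIdx_inl (o : E.OT) (i : Fin d) :
    E.eIdx (Sum.inl (o, i)) = (o.val, i) := rfl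

@[simp] lemma eIdx_inrl (o : E.OT) (i : Fin d) :
    E.eIdx (Sum.inr (Sum.inl (o, i))) = (E.X.bar o.val, i) := rfl

@[simp] lemma eIdx_inrr (l : E.LT) (i : Fin d) :
    E.eIdx (Sum.inr (Sum.inr (l, i))) = (l.val, i) := rfl

variable (ρ : E.G →* Matrix (Fin d) (Fin d) ℚ) (t : ℚ)

lemma submatrix_J :
    (1 + t • E.Jm ρ).submatrix E.eIdx E.eIdx =
      Matrix.fromBlocks 1
        (Matrix.fromCols
          (blk fun o p : E.OT => if p = o then t • ρ (E.F (E.X.bar p.val)) else 0) 0)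
        (Matrix.fromRows
          (blk fun p o : E.OT => if o = p then t • ρ (E.F o.val) else 0) 0)
        (Matrix.fromBlocks 1 0 0
          (blk fun l l' : E.LT =>
            if l = l' then 1 + t • ρ (E.F l'.val) else 0)) := by
  ext pq rs
  rcases pq with ⟨o, i⟩ | ⟨o, i⟩ | ⟨l, i⟩ <;> rcases rs with ⟨p, j⟩ | ⟨p, j⟩ | ⟨m, j⟩ <;>
    simp only [Matrix.submatrix_apply, eIdx_inl, eIdx_inrl, eIdx_inrr,
      Matrix.fromBlocks_apply₁₁, Matrix.fromBlocks_apply₁₂, Matrix.fromBlocks_apply₂₁,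
      Matrix.fromBlocks_apply₂₂, Matrix.fromCols, Matrix.fromRows, Matrix.of_apply,
      Sum.elim_inl, Sum.elim_inr, Matrix.add_apply, Matrix.smul_apply, Jm, blk,
      Matrix.one_apply, Matrix.zero_apply, Prod.ext_iff]
  · -- O, O
    rw [if_neg (E.OT_ne_barOT p o)]
    simp [Subtype.coe_inj]
  · -- O, bar O
    rw [if_neg (fun hc => E.OT_ne_barOT o p hc.1)]
    by_cases hpo : p = o
    · subst hpo; simp
    · have hb : E.X.bar p.val ≠ E.X.bar o.val := fun e =>
        hpo (Subtype.ext (by simpa [E.X.bar_bar] using congrArg E.X.bar e))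
      simp [hpo, hb]
  · -- O, L
    rw [if_neg (fun hc => E.OT_ne_LT o m hc.1),
      if_neg (fun e : (m.val : E.X.H) = E.X.bar o.val => E.barOT_ne_LT o m e.symm)]
    simp
  · -- bar O, O
    rw [E.X.bar_bar, if_neg (fun hc => E.OT_ne_barOT p o hc.1.symm)]
    by_cases hpo : p = o
    · subst hpo; simp [Sum.elim, blk]
    · have hc : (p.val : E.X.H) ≠ o.val := fun e => hpo (Subtype.ext e)
      simp [hpo, hc, Sum.elim, blk]
  · -- bar O, bar O
    rw [E.X.bar_bar, if_neg (fun e : E.X.bar p.val = (o.val : E.X.H) =>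
      E.OT_ne_barOT o p e.symm)]
    have hiff : E.X.bar o.val = E.X.bar p.val ↔ o = p :=
      ⟨fun e => Subtype.ext (by simpa [E.X.bar_bar] using congrArg E.X.bar e),
        fun e => by rw [e]⟩
    simp [hiff]
  · -- bar O, L
    rw [E.X.bar_bar, if_neg (fun hc => E.barOT_ne_LT o m hc.1),
      if_neg (fun e : (m.val : E.X.H) = o.val => E.OT_ne_LT o m e.symm)]
    simp
  · -- L, O
    rw [l.2, if_neg (fun hc => E.OT_ne_LT p l hc.1.symm), if_neg (E.OT_ne_LT p l)]
    simp [Sum.elim]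
  · -- L, bar O
    rw [l.2, if_neg (fun hc => E.barOT_ne_LT p l hc.1.symm),
      if_neg (E.barOT_ne_LT p l)]
    simp
  · -- L, L
    rw [l.2]
    by_cases hlm : l = m
    · subst hlm
      simp [Matrix.add_apply, Matrix.smul_apply, Matrix.one_apply]
    · have h1 : (l.val : E.X.H) ≠ m.val := fun e => hlm (Subtype.ext e)
      simp [hlm, h1, Ne.symm h1]

end Aux3

end EdgeFreeCover
namespace EdgeFreeCover

section Aux4

variable {d : ℕ} (E : EdgeFreeCover) (ρ : E.G →* Matrix (Fin d) (Fin d) ℚ) (t : ℚ)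

lemma card_OT : Fintype.card E.OT = E.numEdgesX := by
  have hcong := Fintype.card_congr (Equiv.ofBijective E.fH E.fH_bij)
  simp only [Fintype.card_sum] at hcong
  have hL : Fintype.card E.LT = E.legsFinset.card := by
    rw [Fintype.card_subtype]
    rfl
  rw [hL] at hcong
  have hle : E.legsFinset.card ≤ Fintype.card E.X.H := by
    apply Finset.card_le_card
    intro x _
    exact Finset.mem_univ x
  unfold numEdgesX
  omega

lemma C1B1 : (blk fun p o : E.OT => if o = p then t • ρ (E.F o.val) else 0) *
    (blk fun o q : E.OT => if q = o then t • ρ (E.F (E.X.bar q.val)) else 0) =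
    (t ^ 2) • (1 : Matrix (E.OT × Fin d) (E.OT × Fin d) ℚ) := by
  rw [blk_mul, blk_one (α := E.OT), blk_smul]
  apply blk_ext
  intro p q
  rw [Finset.sum_eq_single p]
  · by_cases hqp : q = p
    · subst hqp
      simp only [if_pos rfl, if_true]
      rw [smul_mul_smul_comm, rhoF_mul, pow_two]
    · simp [hqp, Ne.symm hqp]
  · intro o _ ho
    simp [ho]
  · simp

lemma det_one_add_J : (1 + t • E.Jm ρ).det =
    (1 - t ^ 2) ^ (E.numEdgesX * d) *
      ∏ h ∈ E.legsFinset, (1 + t • ρ (E.F h)).det := by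
  rw [← Matrix.det_submatrix_equiv_self E.eIdx, submatrix_J]
  rw [Matrix.det_fromBlocks_one₁₁, Matrix.fromRows_mul_fromCols]
  rw [C1B1]
  rw [Matrix.mul_zero, Matrix.zero_mul, Matrix.zero_mul, sub_eq_add_neg,
    Matrix.fromBlocks_neg, Matrix.fromBlocks_add]
  rw [show (0 : Matrix (E.OT × Fin d) (E.LT × Fin d) ℚ) + -0 = 0 by simp,
    show (0 : Matrix (E.LT × Fin d) (E.OT × Fin d) ℚ) + -0 = 0 by simp]
  have h1 : (1 : Matrix (E.OT × Fin d) (E.OT × Fin d) ℚ) + -(t ^ 2 • 1) =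
      (1 - t ^ 2) • 1 := by
    rw [sub_smul, one_smul, sub_eq_add_neg]
  have h2 : ((blk fun l l' : E.LT => if l = l' then 1 + t • ρ (E.F l'.val) else 0) +
      -(0 : Matrix (E.LT × Fin d) (E.LT × Fin d) ℚ)) =
      blk fun l l' : E.LT => if l = l' then 1 + t • ρ (E.F l'.val) else 0 := by
    simp
  rw [h1, h2, Matrix.det_fromBlocks_zero₂₁, Matrix.det_smul, Matrix.det_one, mul_one,
    Fintype.card_prod, Fintype.card_fin, card_OT]
  congr 1
  -- determinant of the leg block
  have h3 : (blk fun l l' : E.LT => if l = l' then 1 + t • ρ (E.F l'.val) else 0) =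
      (Matrix.blockDiagonal fun l : E.LT => 1 + t • ρ (E.F l.val)).submatrix
        (Equiv.prodComm (E.LT) (Fin d)) (Equiv.prodComm (E.LT) (Fin d)) := by
    ext ⟨l, i⟩ ⟨l', j⟩
    simp only [blk, Matrix.submatrix_apply, Equiv.prodComm_apply, Prod.swap_prod_mk,
      Matrix.blockDiagonal_apply]
    by_cases hll : l = l' <;> simp [hll]
  rw [h3, Matrix.det_submatrix_equiv_self, Matrix.det_blockDiagonal]
  rw [← Finset.prod_subtype E.legsFinset (fun x => by
    simp [legsFinset] : ∀ x, x ∈ E.legsFinset ↔ E.X.bar x = x)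
    (fun h => (1 + t • ρ (E.F h)).det)]

end Aux4

end EdgeFreeCover
namespace EdgeFreeCover

section Aux5

open Polynomial

variable {d : ℕ}

lemma eval_charpoly_mat (M : Matrix (Fin d) (Fin d) ℚ) (s : ℚ) :
    (M.charpoly).eval s = (s • (1 : Matrix (Fin d) (Fin d) ℚ) - M).det := by
  rw [Matrix.charpoly, ← Polynomial.coe_evalRingHom, RingHom.map_det]
  congr 1
  ext i j
  by_cases h : i = j <;>
    simp [Matrix.charmatrix_apply, Matrix.map_apply, Matrix.diagonal_apply,
      Matrix.one_apply, Matrix.sub_apply, Matrix.smul_apply, h]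

lemma key_leg (M : Matrix (Fin d) (Fin d) ℚ) (hM : M * M = 1) (s t : ℚ)
    (hst : s * t = 1) :
    (M.charpoly.eval s) * (s ^ d * (1 + t • M).det) = (s ^ 2 - 1) ^ d := by
  have h1 : s • ((1 : Matrix (Fin d) (Fin d) ℚ) + t • M) = s • 1 + M := by
    rw [smul_add, smul_smul, hst, one_smul]
  have hdet : s ^ d * (1 + t • M).det = (s • (1 : Matrix (Fin d) (Fin d) ℚ) + M).det := by
    rw [← h1, Matrix.det_smul, Fintype.card_fin]
  have h2 : (s • (1 : Matrix (Fin d) (Fin d) ℚ) - M) * (s • 1 + M) = (s ^ 2 - 1) • 1 := by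
    have a1 : (s • (1 : Matrix (Fin d) (Fin d) ℚ)) * (s • 1) = (s * s) • 1 := by
      rw [Matrix.smul_mul, one_mul, smul_smul]
    have a2 : (s • (1 : Matrix (Fin d) (Fin d) ℚ)) * M = s • M := by
      rw [Matrix.smul_mul, one_mul]
    have a3 : M * (s • (1 : Matrix (Fin d) (Fin d) ℚ)) = s • M := by
      rw [Matrix.mul_smul, Matrix.mul_one]
    rw [Matrix.sub_mul, Matrix.mul_add, Matrix.mul_add, a1, a2, a3, hM, sub_smul,
      one_smul, pow_two]
    abel
  rw [eval_charpoly_mat, hdet, ← Matrix.det_mul, h2, Matrix.det_smul, Fintype.card_fin,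
    Matrix.det_one, mul_one]

variable (E : EdgeFreeCover) (ρ : E.G →* Matrix (Fin d) (Fin d) ℚ)

lemma leg_invol (h : E.X.H) (hh : h ∈ E.legsFinset) :
    ρ (E.F h) * ρ (E.F h) = 1 := by
  have hb : E.X.bar h = h := by
    simpa [legsFinset] using hh
  have := rhoF_mul E ρ h
  rwa [hb] at this

lemma legs_prod (a b : ℕ) (hab : a + b = E.legsFinset.card * d)
    (hchar : (∏ h ∈ E.legsFinset, Matrix.charpoly (ρ (E.F h))) =
      (Polynomial.X - 1) ^ a * (Polynomial.X + 1) ^ b)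
    (t : ℚ) (h0 : t ≠ 0) (h1 : t ≠ 1) (h2 : t ≠ -1) :
    ∏ h ∈ E.legsFinset, (1 + t • ρ (E.F h)).det = (1 + t) ^ a * (1 - t) ^ b := by
  set s := t⁻¹ with hs
  set L := E.legsFinset.card with hL
  have hst : s * t = 1 := inv_mul_cancel₀ h0
  have hs0 : s ≠ 0 := inv_ne_zero h0
  have hs1 : s - 1 ≠ 0 := by
    rw [sub_ne_zero]
    intro e
    exact h1 (by rw [← inv_inv t, ← hs, e, inv_one])
  have hs2 : s + 1 ≠ 0 := by
    intro e
    have : s = -1 := by linarith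
    exact h2 (by rw [← inv_inv t, ← hs, this]; norm_num)
  have key : ∀ h ∈ E.legsFinset,
      ((ρ (E.F h)).charpoly.eval s) * (s ^ d * (1 + t • ρ (E.F h)).det) =
        (s ^ 2 - 1) ^ d :=
    fun h hh => key_leg _ (E.leg_invol ρ h hh) s t hst
  have hprod := Finset.prod_congr rfl key
  rw [Finset.prod_mul_distrib, Finset.prod_mul_distrib, Finset.prod_const,
    Finset.prod_const, ← pow_mul, ← pow_mul, mul_comm d L] at hprod
  have he : ∏ h ∈ E.legsFinset, (ρ (E.F h)).charpoly.eval s = (s - 1) ^ a * (s + 1) ^ b := by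
    rw [← Polynomial.eval_prod, hchar]
    simp
  rw [he] at hprod
  have hC : (s - 1) ^ a * (s + 1) ^ b * s ^ (L * d) ≠ 0 :=
    mul_ne_zero (mul_ne_zero (pow_ne_zero _ hs1) (pow_ne_zero _ hs2)) (pow_ne_zero _ hs0)
  have e1 : (1 + t) * s = s + 1 := by rw [hs]; field_simp
  have e2 : (1 - t) * s = s - 1 := by rw [hs]; field_simp
  have htarget : ((1 + t) ^ a * (1 - t) ^ b) * ((s - 1) ^ a * (s + 1) ^ b * s ^ (L * d)) =
      (s ^ 2 - 1) ^ (L * d) := by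
    calc ((1 + t) ^ a * (1 - t) ^ b) * ((s - 1) ^ a * (s + 1) ^ b * s ^ (L * d))
        = ((1 + t) * s) ^ a * ((1 - t) * s) ^ b * ((s - 1) ^ a * (s + 1) ^ b) := by
          rw [← hab, pow_add, mul_pow, mul_pow]; ring
      _ = (s + 1) ^ a * (s - 1) ^ b * ((s - 1) ^ a * (s + 1) ^ b) := by rw [e1, e2]
      _ = ((s - 1) * (s + 1)) ^ (L * d) := by
          rw [← hab, pow_add, mul_pow, mul_pow]; ring
      _ = (s ^ 2 - 1) ^ (L * d) := by
          rw [show (s - 1) * (s + 1) = s ^ 2 - 1 from by ring]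
  have hQ : (∏ h ∈ E.legsFinset, (1 + t • ρ (E.F h)).det) *
      ((s - 1) ^ a * (s + 1) ^ b * s ^ (L * d)) = (s ^ 2 - 1) ^ (L * d) := by
    linear_combination hprod
  exact mul_right_cancel₀ hC (hQ.trans htarget.symm)

end Aux5

end EdgeFreeCover
namespace EdgeFreeCover

section Aux6

variable {d : ℕ} (E : EdgeFreeCover) (ρ : E.G →* Matrix (Fin d) (Fin d) ℚ)

lemma scalar_main (a b : ℕ) (hab : a + b = E.legsFinset.card * d)
    (hchar : (∏ h ∈ E.legsFinset, Matrix.charpoly (ρ (E.F h))) =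
      (Polynomial.X - 1) ^ a * (Polynomial.X + 1) ^ b)
    (t : ℚ) (h0 : t ≠ 0) (h1 : t ≠ 1) (h2 : t ≠ -1) :
    (1 - t ^ 2) ^ (Fintype.card E.X.V * d) * (1 - t • E.artinW ρ).det =
    (1 - t ^ 2) ^ (E.numEdgesX * d) * (1 + t) ^ a * (1 - t) ^ b *
      (1 - t • (E.artinC ρ * E.artinA ρ) +
        (t ^ 2) • (E.artinC ρ * E.artinQ d - 1)).det := by
  have hne : (1 : ℚ) - t ^ 2 ≠ 0 := by
    have hf : (1 : ℚ) - t ^ 2 = (1 - t) * (1 + t) := by ring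
    rw [hf]
    exact mul_ne_zero (sub_ne_zero.mpr (Ne.symm h1)) (by intro e; apply h2; linarith)
  set c := t / (1 - t ^ 2) with hcdef
  have hc : c * (1 - t ^ 2) = t := div_mul_cancel₀ _ hne
  set J := E.Jm ρ with hJ
  set Sm' := E.Sm ρ with hSm
  set Tm' := E.Tm ρ with hTm
  set CA := E.artinC ρ * E.artinA ρ with hCA
  set CQ := E.artinC ρ * E.artinQ d with hCQ
  have hWd : 1 - t • E.artinW ρ = (1 + t • J) - t • (Tm' * Sm') := by
    rw [W_eq, smul_sub]
    abel
  have hJJ : (1 + t • J) * (1 - t • J) = (1 - t ^ 2) • 1 := by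
    rw [Matrix.mul_sub, Matrix.mul_one, Matrix.mul_smul, Matrix.add_mul, Matrix.one_mul,
      Matrix.smul_mul, J_sq]
    rw [smul_add, smul_smul, sub_smul, one_smul, pow_two]
    abel
  have hfact : (1 + t • J) * (1 - c • ((1 - t • J) * (Tm' * Sm'))) =
      1 - t • E.artinW ρ := by
    rw [Matrix.mul_sub, Matrix.mul_one, Matrix.mul_smul, ← Matrix.mul_assoc, hJJ,
      Matrix.smul_mul, Matrix.one_mul, smul_smul, hc, hWd]
  have hdet1 : (1 - t • E.artinW ρ).det =
      (1 + t • J).det * (1 - c • ((1 - t • J) * (Tm' * Sm'))).det := by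
    rw [← Matrix.det_mul, hfact]
  have hswap : (1 - c • ((1 - t • J) * (Tm' * Sm'))).det =
      (1 - c • (Sm' * ((1 - t • J) * Tm'))).det := by
    have e1 : c • ((1 - t • J) * (Tm' * Sm')) = (c • ((1 - t • J) * Tm')) * Sm' := by
      rw [Matrix.smul_mul, Matrix.mul_assoc]
    rw [e1, Matrix.det_one_sub_mul_comm, Matrix.mul_smul]
  have hSJT : Sm' * ((1 - t • J) * Tm') = CA - t • CQ := by
    rw [Matrix.sub_mul, Matrix.one_mul, Matrix.smul_mul, Matrix.mul_sub, Matrix.mul_smul,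
      ← Matrix.mul_assoc, hSm, hTm, hJ, ST_eq, SJT_eq, hCA, hCQ]
  set M2 : Matrix (E.X.V × Fin d) (E.X.V × Fin d) ℚ :=
    1 - c • CA + (c * t) • CQ with hM2def
  have hinner : (1 : Matrix (E.X.V × Fin d) (E.X.V × Fin d) ℚ) - c • (CA - t • CQ) = M2 := by
    rw [hM2def, smul_sub, smul_smul]
    abel
  have hM2 : (1 - t ^ 2) • M2 = 1 - t • CA + (t ^ 2) • (CQ - 1) := by
    rw [hM2def, smul_add, smul_sub, smul_smul, smul_smul, smul_sub]
    rw [mul_comm (1 - t ^ 2) c, hc, show (1 - t ^ 2) * (c * t) = (c * (1 - t ^ 2)) * t by ring,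
      hc, ← pow_two, sub_smul, one_smul]
    abel
  have hdet3 : (1 - t ^ 2) ^ (Fintype.card E.X.V * d) * M2.det =
      (1 - t • CA + (t ^ 2) • (CQ - 1)).det := by
    rw [← hM2, Matrix.det_smul, Fintype.card_prod, Fintype.card_fin]
  rw [hdet1, hswap, hSJT, hinner, hJ, det_one_add_J E ρ t,
    legs_prod E ρ a b hab hchar t h0 h1 h2, ← hdet3]
  ring

end Aux6

end EdgeFreeCover

/-- three-term determinant formula for the Artin–Ihara `L`-function of
an edge-free quotient, for a degree-`d` representation `ρ` of `G`:
`L(u,ρ,Y/𝕏)⁻¹ = (1-u²)^((b₁(X)-1)d) (1+u)^(l_{ρ,+}) (1-u)^(l_{ρ,-})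
  · det(I_{nd} - C_ρA_ρu + (C_ρQ_ρ - I_{nd})u²)`,
where `b₁(X) = m - n + 1` and `l_{ρ,±}` are the numbers of `±1` eigenvalues of the
matrices `ρ(F(l))` over all legs `l` (encoded via the product of their characteristic
polynomials). Using `L(u,ρ,Y/𝕏)⁻¹ = det(I_{kd} - W_ρ u)` and multiplying both sides
by `(1-u²)^{nd}` to avoid the possibly negative exponent `(b₁-1)d = (m-n)d`. -/
theorem L_three_term (E : EdgeFreeCover) {d : ℕ}
    (ρ : E.G →* Matrix (Fin d) (Fin d) ℚ)
    (a b : ℕ) (hab : a + b = E.legsFinset.card * d)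
    (hchar : (∏ h ∈ E.legsFinset, Matrix.charpoly (ρ (E.F h))) =
      (X - 1) ^ a * (X + 1) ^ b) :
    (1 - X ^ 2) ^ (Fintype.card E.X.V * d) *
      Matrix.det (1 - (X : Polynomial ℚ) • ((E.artinW ρ).map Polynomial.C)) =
    (1 - X ^ 2) ^ (E.numEdgesX * d) * (1 + X) ^ a * (1 - X) ^ b *
      Matrix.det
        (1 - (X : Polynomial ℚ) • ((E.artinC ρ * E.artinA ρ).map Polynomial.C) +
          ((X : Polynomial ℚ) ^ 2) •
            (((E.artinC ρ * E.artinQ d).map Polynomial.C) - 1)) := by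
  classical
  rw [← sub_eq_zero]
  apply Polynomial.eq_zero_of_infinite_isRoot
  refine Set.Infinite.mono ?_ ((Set.toFinite ({0, 1, -1} : Set ℚ)).infinite_compl)
  intro t ht
  simp only [Set.mem_compl_iff, Set.mem_insert_iff, Set.mem_singleton_iff] at ht
  push_neg at ht
  obtain ⟨h0, h1, h2⟩ := ht
  simp only [Set.mem_setOf_eq, Polynomial.IsRoot]
  rw [Polynomial.eval_sub, sub_eq_zero]
  have hWmap : (1 - (X : Polynomial ℚ) • ((E.artinW ρ).map C)).map
      (Polynomial.evalRingHom t) = 1 - t • E.artinW ρ := by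
    ext i j
    simp only [Matrix.map_apply, Matrix.sub_apply, Matrix.smul_apply, Matrix.one_apply,
      smul_eq_mul, Polynomial.coe_evalRingHom, Polynomial.eval_sub, Polynomial.eval_mul,
      Polynomial.eval_X, Polynomial.eval_C, apply_ite (Polynomial.eval t),
      Polynomial.eval_one, Polynomial.eval_zero]
  have hRmap : ((1 : Matrix (E.X.V × Fin d) (E.X.V × Fin d) (Polynomial ℚ)) -
        (X : Polynomial ℚ) • ((E.artinC ρ * E.artinA ρ).map C) +
        ((X : Polynomial ℚ) ^ 2) • (((E.artinC ρ * E.artinQ d).map C) - 1)).map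
      (Polynomial.evalRingHom t) =
      1 - t • (E.artinC ρ * E.artinA ρ) + (t ^ 2) • (E.artinC ρ * E.artinQ d - 1) := by
    ext i j
    simp only [Matrix.map_apply, Matrix.sub_apply, Matrix.add_apply, Matrix.smul_apply,
      Matrix.one_apply, smul_eq_mul, Polynomial.coe_evalRingHom, Polynomial.eval_sub,
      Polynomial.eval_add, Polynomial.eval_mul, Polynomial.eval_pow, Polynomial.eval_X,
      Polynomial.eval_C, apply_ite (Polynomial.eval t), Polynomial.eval_one,
      Polynomial.eval_zero]
  simp only [Polynomial.eval_mul, Polynomial.eval_pow, Polynomial.eval_sub,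
    Polynomial.eval_add, Polynomial.eval_one, Polynomial.eval_X]
  rw [← Polynomial.coe_evalRingHom, RingHom.map_det, RingHom.map_det,
    RingHom.mapMatrix_apply, RingHom.mapMatrix_apply, hWmap, hRmap]
  exact EdgeFreeCover.scalar_main E ρ a b hab hchar t h0 h1 h2
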